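/- arXiv:2308.08781 — 5 statements merged into one kernel-verified Lean document; each statement's English description precedes it below -/
import Mathlib

section
/- Let U be any unitary matrix in Matrix.unitaryGroup (Fin n) ℂ and X ∈ Matrix (Fin n) (Fin n) ℂ. Then the Cesàro averages S_r = (1/r) ∑_{i=0}^{r-1} U^i * X * (U^i)⁻¹ converge as r → ∞ to a limit L ∈ Matrix (Fin n) (Fin n) ℂ satisfying: (i) U * L = L * U, and (ii) for every matrix Y with U * Y = Y * U, trace((X - L)ᴴ * Y) = 0. That is, the asymptotic group average of X under conjugation by U is the orthogonal projection (with respect to the Frobenius inner product) of X onto the commutant of U. -/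
open Finset Filter Matrix

attribute [local instance] Matrix.normedAddCommGroup Matrix.normedSpace

noncomputable section CesaroAux

variable {n : ℕ}

/-- The linear equivalence between matrices and Euclidean space (Frobenius structure). -/
def matEquiv (n : ℕ) : Matrix (Fin n) (Fin n) ℂ ≃ₗ[ℂ] EuclideanSpace ℂ (Fin n × Fin n) where
  toFun A := WithLp.toLp 2 (fun p : Fin n × Fin n => A p.1 p.2)
  invFun x := Matrix.of fun i j => x (i, j)
  map_add' _ _ := rfl
  map_smul' _ _ := rfl
  left_inv _ := rfl
  right_inv _ := rfl

lemma matEquiv_inner (A B : Matrix (Fin n) (Fin n) ℂ) :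
    (inner ℂ (matEquiv n A) (matEquiv n B) : ℂ) = Matrix.trace (Aᴴ * B) := by
  rw [PiLp.inner_apply]
  simp only [RCLike.inner_apply, matEquiv, LinearEquiv.coe_mk]
  rw [Fintype.sum_prod_type, Finset.sum_comm]
  simp only [Matrix.trace, Matrix.diag, Matrix.mul_apply, Matrix.conjTranspose_apply]
  exact Finset.sum_congr rfl fun _ _ => Finset.sum_congr rfl fun _ _ => mul_comm _ _

end CesaroAux

/-- For any unitary `U` and any matrix `X`, the Cesàro averages
`S_r = (1/r) ∑_{i=0}^{r-1} U^i * X * (U^i)⁻¹` converge as `r → ∞` to a limit `L` which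
(i) commutes with `U` and (ii) satisfies `trace((X - L)ᴴ * Y) = 0` for every `Y` commuting
with `U`; i.e. the asymptotic group average of `X` is the Frobenius-orthogonal projection
of `X` onto the commutant of `U`. -/
theorem cesaro_average_tendsto_commutant_projection {n : ℕ}
    (U : Matrix.unitaryGroup (Fin n) ℂ) (X : Matrix (Fin n) (Fin n) ℂ) :
    ∃ L : Matrix (Fin n) (Fin n) ℂ,
      Tendsto (fun r : ℕ => (1 / (r : ℂ)) • ∑ i ∈ Finset.range r,
          (U : Matrix (Fin n) (Fin n) ℂ) ^ i * X * (((U : Matrix (Fin n) (Fin n) ℂ)) ^ i)⁻¹)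
        atTop (nhds L) ∧
      (U : Matrix (Fin n) (Fin n) ℂ) * L = L * (U : Matrix (Fin n) (Fin n) ℂ) ∧
      (∀ Y : Matrix (Fin n) (Fin n) ℂ,
        (U : Matrix (Fin n) (Fin n) ℂ) * Y = Y * (U : Matrix (Fin n) (Fin n) ℂ) →
          Matrix.trace ((X - L)ᴴ * Y) = 0) := by
  classical
  set Um : Matrix (Fin n) (Fin n) ℂ := (U : Matrix (Fin n) (Fin n) ℂ) with hUm
  have hsU : star Um * Um = 1 := Matrix.UnitaryGroup.star_mul_self U
  have hUs : Um * star Um = 1 := by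
    have := mul_eq_one_comm.mp hsU
    exact this
  set e := matEquiv n with he
  -- the conjugation operator
  let T : Matrix (Fin n) (Fin n) ℂ →ₗ[ℂ] Matrix (Fin n) (Fin n) ℂ :=
    { toFun := fun A => Um * A * star Um
      map_add' := fun A B => by noncomm_ring
      map_smul' := fun c A => by
        simp [Matrix.mul_smul, Matrix.smul_mul] }
  have keymul : ∀ A : Matrix (Fin n) (Fin n) ℂ,
      (Um * A * star Um)ᴴ * (Um * A * star Um) = Um * (Aᴴ * A) * star Um := by
    intro A
    simp only [Matrix.star_eq_conjTranspose, Matrix.conjTranspose_mul,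
      Matrix.conjTranspose_conjTranspose]
    calc Um * (Aᴴ * Umᴴ) * (Um * A * Umᴴ)
        = Um * Aᴴ * (Umᴴ * Um) * A * Umᴴ := by noncomm_ring
      _ = Um * (Aᴴ * A) * Umᴴ := by
          rw [← Matrix.star_eq_conjTranspose Um, hsU]; noncomm_ring
  have keytr : ∀ A : Matrix (Fin n) (Fin n) ℂ,
      Matrix.trace ((T A)ᴴ * T A) = Matrix.trace (Aᴴ * A) := by
    intro A
    show Matrix.trace ((Um * A * star Um)ᴴ * (Um * A * star Um)) = _
    rw [keymul, Matrix.trace_mul_comm, ← Matrix.mul_assoc, hsU, Matrix.one_mul]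
  -- the operator on Euclidean space
  let fE : EuclideanSpace ℂ (Fin n × Fin n) →L[ℂ] EuclideanSpace ℂ (Fin n × Fin n) :=
    LinearMap.toContinuousLinearMap
      (e.toLinearMap ∘ₗ T ∘ₗ e.symm.toLinearMap)
  have hfE : ∀ A : Matrix (Fin n) (Fin n) ℂ, fE (e A) = e (T A) := by
    intro A
    show e (T (e.symm (e A))) = e (T A)
    rw [e.symm_apply_apply]
  have hiso : ∀ A : Matrix (Fin n) (Fin n) ℂ, ‖e (T A)‖ = ‖e A‖ := by
    intro A
    have h2 : (inner ℂ (e (T A)) (e (T A)) : ℂ) = inner ℂ (e A) (e A) := by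
      rw [matEquiv_inner, matEquiv_inner, keytr]
    have h3 : (‖e (T A)‖ : ℝ) ^ 2 = ‖e A‖ ^ 2 := by
      rw [inner_self_eq_norm_sq_to_K, inner_self_eq_norm_sq_to_K] at h2
      exact_mod_cast h2
    calc ‖e (T A)‖ = Real.sqrt (‖e (T A)‖ ^ 2) := (Real.sqrt_sq (norm_nonneg _)).symm
      _ = Real.sqrt (‖e A‖ ^ 2) := by rw [h3]
      _ = ‖e A‖ := Real.sqrt_sq (norm_nonneg _)
  have hnorm : ‖fE‖ ≤ 1 := by
    refine ContinuousLinearMap.opNorm_le_bound _ zero_le_one fun x => ?_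
    rw [one_mul]
    have : fE x = e (T (e.symm x)) := rfl
    rw [this, hiso (e.symm x), e.apply_symm_apply]
  set K := LinearMap.eqLocus (fE : EuclideanSpace ℂ (Fin n × Fin n) →ₗ[ℂ]
    EuclideanSpace ℂ (Fin n × Fin n)) 1 with hK
  have hmain := fE.tendsto_birkhoffAverage_orthogonalProjection (𝕜 := ℂ) hnorm (e X)
  set P : EuclideanSpace ℂ (Fin n × Fin n) :=
    ((K.orthogonalProjection (e X) : K) : EuclideanSpace ℂ (Fin n × Fin n)) with hP
  have hPK : P ∈ K := (K.orthogonalProjection (e X)).2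
  refine ⟨e.symm P, ?_, ?_, ?_⟩
  · -- convergence
    have hc : Continuous (e.symm : EuclideanSpace ℂ (Fin n × Fin n) →
        Matrix (Fin n) (Fin n) ℂ) := e.symm.toLinearMap.continuous_of_finiteDimensional
    have := (hc.tendsto P).comp hmain
    refine this.congr fun r => ?_
    show e.symm (birkhoffAverage ℂ fE _root_.id r (e X)) = _
    -- first: iterates
    have hpowinv : ∀ i : ℕ, (Um ^ i)⁻¹ = (star Um) ^ i := by
      intro i
      refine Matrix.inv_eq_left_inv ?_
      rw [← star_pow]
      exact Matrix.UnitaryGroup.star_mul_self (U ^ i)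
    have hiter : ∀ i : ℕ, T^[i] X = Um ^ i * X * (star Um) ^ i := by
      intro i
      induction i with
      | zero => simp
      | succ i ih =>
        rw [Function.iterate_succ_apply', ih]
        show Um * (Um ^ i * X * star Um ^ i) * star Um = _
        rw [pow_succ' Um, pow_succ (star Um)]
        noncomm_ring
    have hsemi : ∀ i : ℕ, (fE : EuclideanSpace ℂ (Fin n × Fin n) →
        EuclideanSpace ℂ (Fin n × Fin n))^[i] (e X) = e (T^[i] X) := by
      intro i
      induction i with
      | zero => rfl
      | succ i ih => rw [Function.iterate_succ_apply', ih, Function.iterate_succ_apply', hfE]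
    rw [birkhoffAverage, birkhoffSum, _root_.map_smul, map_sum, one_div]
    congr 1
    refine Finset.sum_congr rfl fun i _ => ?_
    rw [id_eq, hsemi, e.symm_apply_apply, hiter, hpowinv]
  · -- commutes with U
    have hfix : fE P = P := hPK
    have hTL : T (e.symm P) = e.symm P := by
      have h1 : e (T (e.symm P)) = P := by
        rw [← hfE, e.apply_symm_apply, hfix]
      have h2 := congrArg e.symm h1
      rwa [e.symm_apply_apply] at h2
    have hTL' : Um * e.symm P * star Um = e.symm P := hTL
    have := congrArg (fun M => M * Um) hTL'
    simpa [Matrix.mul_assoc, hsU, Matrix.mul_one] using this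
  · -- orthogonality
    intro Y hY
    have hTY : T Y = Y := by
      show Um * Y * star Um = Y
      rw [hY, Matrix.mul_assoc, hUs, Matrix.mul_one]
    have hYK : e Y ∈ K := by
      show fE (e Y) = (1 : EuclideanSpace ℂ (Fin n × Fin n) →ₗ[ℂ] _) (e Y)
      rw [hfE, hTY]; rfl
    have horth : e X - P ∈ Kᗮ := K.sub_starProjection_mem_orthogonal (e X)
    have h0 : (inner ℂ (e Y) (e X - P) : ℂ) = 0 :=
      (Submodule.mem_orthogonal K _).mp horth (e Y) hYK
    have h0' : (inner ℂ (e X - P) (e Y) : ℂ) = 0 := inner_eq_zero_symm.mp h0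
    have hXL : e (X - e.symm P) = e X - P := by
      rw [map_sub, e.apply_symm_apply]
    rw [← matEquiv_inner, ← he, hXL, h0']
end

section
/- Let A ∈ Matrix (Fin n) (Fin n) ℝ be symmetric (Aᵀ = A) and let P be a Moore–Penrose pseudoinverse of A. Let v ∈ Fin n → ℝ and suppose (1 - A * P).mulVec v = 0 (equivalently, v lies in the column space of A). Set x = P.mulVec v and β = 1 + vᵀ (P.mulVec v), and assume β ≠ 0. Then the matrix B = P - (1/β) • (x ⊗ xᵀ) (where x ⊗ xᵀ is the outer product Matrix.vecMulVec x x) is a Moore–Penrose pseudoinverse of the rank-one update A + Matrix.vecMulVec v v. -/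
open Matrix

/-- `P` is a Moore–Penrose pseudoinverse of `A`. -/
def IsMoorePenrose {n : ℕ} (A P : Matrix (Fin n) (Fin n) ℝ) : Prop :=
  A * P * A = A ∧ P * A * P = P ∧ (A * P)ᵀ = A * P ∧ (P * A)ᵀ = P * A

lemma mul_vecMulVec' {n : ℕ} (A : Matrix (Fin n) (Fin n) ℝ) (w u : Fin n → ℝ) :
    A * Matrix.vecMulVec w u = Matrix.vecMulVec (A.mulVec w) u := by
  ext i j
  simp [Matrix.mul_apply, Matrix.vecMulVec_apply, Matrix.mulVec, dotProduct,
    Finset.sum_mul, mul_assoc]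

lemma vecMulVec_mul' {n : ℕ} (w u : Fin n → ℝ) (A : Matrix (Fin n) (Fin n) ℝ) :
    Matrix.vecMulVec w u * A = Matrix.vecMulVec w (Aᵀ.mulVec u) := by
  ext i j
  simp only [Matrix.mul_apply, Matrix.vecMulVec_apply, Matrix.mulVec, dotProduct,
    Matrix.transpose_apply, Finset.mul_sum]
  exact Finset.sum_congr rfl fun k _ => by ring

lemma vecMulVec_mul_vecMulVec' {n : ℕ} (w u w' u' : Fin n → ℝ) :
    Matrix.vecMulVec w u * Matrix.vecMulVec w' u'
      = (u ⬝ᵥ w') • Matrix.vecMulVec w u' := by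
  ext i j
  simp only [Matrix.mul_apply, Matrix.vecMulVec_apply, Matrix.smul_apply,
    dotProduct, Finset.sum_mul, Finset.mul_sum, smul_eq_mul]
  exact Finset.sum_congr rfl fun k _ => by ring

/-- Rank-one pseudoinverse update (case `y = 0`, `β ≠ 0`): if `A` is symmetric with
pseudoinverse `P`, `v` lies in the column space of `A` (i.e. `(1 - A*P).mulVec v = 0`), and
`β = 1 + vᵀ (P v) ≠ 0`, then `P - (1/β) • x xᵀ` with `x = P v` is a Moore–Penrose
pseudoinverse of `A + v vᵀ`. -/
theorem pinv_rank_one_update_in_range {n : ℕ} (A P : Matrix (Fin n) (Fin n) ℝ)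
    (hA : Aᵀ = A) (hP : IsMoorePenrose A P) (v : Fin n → ℝ)
    (hv : (1 - A * P).mulVec v = 0)
    (hβ : 1 + v ⬝ᵥ P.mulVec v ≠ 0) :
    IsMoorePenrose (A + Matrix.vecMulVec v v)
      (P - (1 / (1 + v ⬝ᵥ P.mulVec v)) •
        Matrix.vecMulVec (P.mulVec v) (P.mulVec v)) := by
  obtain ⟨h1, h2, h3, h4⟩ := hP
  have hPtA : Pᵀ * A = A * P := by
    conv_lhs => rw [← hA]
    rw [← Matrix.transpose_mul, h3]
  have hAPt : A * Pᵀ = P * A := by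
    conv_lhs => rw [← hA]
    rw [← Matrix.transpose_mul, h4]
  have f1 : A * Pᵀ * A = A := by
    have h : (A * Pᵀ * A)ᵀ = A := by
      rw [Matrix.transpose_mul, Matrix.transpose_mul, Matrix.transpose_transpose, hA,
        ← Matrix.mul_assoc, h1]
    calc A * Pᵀ * A = ((A * Pᵀ * A)ᵀ)ᵀ := by rw [Matrix.transpose_transpose]
      _ = A := by rw [h, hA]
  have hcomm : A * P = P * A := by
    calc A * P = (A * Pᵀ * A) * P := by rw [f1]
      _ = (A * Pᵀ) * (A * P) := by rw [Matrix.mul_assoc]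
      _ = (P * A) * (Pᵀ * A) := by rw [hAPt, ← hPtA]
      _ = P * (A * Pᵀ * A) := by simp only [Matrix.mul_assoc]
      _ = P * A := by rw [f1]
  have f2 : Pᵀ * A * Pᵀ = Pᵀ := by
    have h : (Pᵀ * A * Pᵀ)ᵀ = P := by
      rw [Matrix.transpose_mul, Matrix.transpose_mul, Matrix.transpose_transpose,
        hA, ← Matrix.mul_assoc, h2]
    calc Pᵀ * A * Pᵀ = ((Pᵀ * A * Pᵀ)ᵀ)ᵀ := by rw [Matrix.transpose_transpose]
      _ = Pᵀ := by rw [h]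
  have hPt : Pᵀ = P := by
    calc Pᵀ = Pᵀ * A * Pᵀ := f2.symm
      _ = A * P * Pᵀ := by rw [hPtA]
      _ = P * A * Pᵀ := by rw [hcomm]
      _ = P * (A * Pᵀ) := by rw [Matrix.mul_assoc]
      _ = P * (P * A) := by rw [hAPt]
      _ = P * (A * P) := by rw [← hcomm]
      _ = P * A * P := by rw [Matrix.mul_assoc]
      _ = P := h2
  set x := P.mulVec v with hxdef
  have hx : (A * P).mulVec v = v := by
    rw [Matrix.sub_mulVec, Matrix.one_mulVec, sub_eq_zero] at hv
    exact hv.symm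
  have hAx : A.mulVec x = v := by
    rw [hxdef, Matrix.mulVec_mulVec]
    exact hx
  have hPAx : (P * A).mulVec x = x := by
    rw [hxdef, Matrix.mulVec_mulVec, h2]
  set c := 1 / (1 + v ⬝ᵥ x) with hcdef
  have hc1 : c * (v ⬝ᵥ x) = 1 - c := by
    rw [hcdef]
    field_simp
    ring
  have hMB : (A + Matrix.vecMulVec v v) * (P - c • Matrix.vecMulVec x x) = A * P := by
    rw [add_mul, mul_sub, mul_sub, Matrix.mul_smul, Matrix.mul_smul,
      mul_vecMulVec', hAx, vecMulVec_mul' v v P, hPt, vecMulVec_mul_vecMulVec',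
      smul_smul, hc1, sub_smul, one_smul]
    abel
  have hBM : (P - c • Matrix.vecMulVec x x) * (A + Matrix.vecMulVec v v) = P * A := by
    have hxv : x ⬝ᵥ v = v ⬝ᵥ x := dotProduct_comm x v
    rw [sub_mul, mul_add, mul_add, Matrix.smul_mul, Matrix.smul_mul,
      mul_vecMulVec', vecMulVec_mul' x x A, hA, hAx, vecMulVec_mul_vecMulVec',
      hxv, smul_smul, hc1, sub_smul, one_smul]
    abel
  refine ⟨?_, ?_, ?_, ?_⟩
  · rw [hMB, mul_add, h1, mul_vecMulVec', hx]
  · rw [Matrix.mul_assoc, ← Matrix.mul_assoc, hBM, mul_sub, Matrix.mul_smul, h2,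
      mul_vecMulVec', hPAx]
  · rw [hMB, h3]
  · rw [hBM, h4]
end

section
/- Let A ∈ Matrix (Fin n) (Fin n) ℝ be symmetric (Aᵀ = A) and let P be a Moore–Penrose pseudoinverse of A. Let v ∈ Fin n → ℝ, set x = P.mulVec v, y = (1 - A * P).mulVec v, and β = 1 + vᵀ (P.mulVec v), and suppose y ≠ 0. Then the matrix B = P - (1/‖y‖²) • (Matrix.vecMulVec x y + Matrix.vecMulVec y x) + (β/‖y‖⁴) • Matrix.vecMulVec y y is a Moore–Penrose pseudoinverse of the rank-one update A + Matrix.vecMulVec v v, where ‖y‖² = yᵀ y. -/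
open Matrix

namespace PinvAux

variable {n : ℕ}

lemma mul_vmv (M : Matrix (Fin n) (Fin n) ℝ) (a b : Fin n → ℝ) :
    M * vecMulVec a b = vecMulVec (M.mulVec a) b := by
  ext i j
  simp only [mul_apply, vecMulVec_apply, mulVec, dotProduct, Finset.sum_mul]
  exact Finset.sum_congr rfl fun k _ => by ring

lemma vmv_mul (a b : Fin n → ℝ) (M : Matrix (Fin n) (Fin n) ℝ) :
    vecMulVec a b * M = vecMulVec a (Mᵀ.mulVec b) := by
  ext i j
  simp only [mul_apply, vecMulVec_apply, mulVec, dotProduct, transpose_apply, Finset.mul_sum]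
  exact Finset.sum_congr rfl fun k _ => by ring

lemma vmv_vmv (a b c d : Fin n → ℝ) :
    vecMulVec a b * vecMulVec c d = (b ⬝ᵥ c) • vecMulVec a d := by
  ext i j
  simp only [mul_apply, vecMulVec_apply, Matrix.smul_apply, smul_eq_mul, dotProduct, Finset.sum_mul]
  exact Finset.sum_congr rfl fun k _ => by ring

lemma vmv_transpose (a b : Fin n → ℝ) : (vecMulVec a b)ᵀ = vecMulVec b a := by
  ext i j; simp [vecMulVec_apply, mul_comm]

lemma vmv_mulVec (a b c : Fin n → ℝ) : (vecMulVec a b).mulVec c = (b ⬝ᵥ c) • a := by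
  ext i
  simp only [mulVec, dotProduct, vecMulVec_apply, Pi.smul_apply, smul_eq_mul, Finset.sum_mul]
  exact Finset.sum_congr rfl fun k _ => by ring

lemma vmv_sub_left (a b c : Fin n → ℝ) :
    vecMulVec (a - b) c = vecMulVec a c - vecMulVec b c := by
  ext i j; simp [vecMulVec_apply, sub_mul]

lemma vmv_add_left (a b c : Fin n → ℝ) :
    vecMulVec (a + b) c = vecMulVec a c + vecMulVec b c := by
  ext i j; simp [vecMulVec_apply, add_mul]

lemma vmv_smul_left (r : ℝ) (a c : Fin n → ℝ) :
    vecMulVec (r • a) c = r • vecMulVec a c := by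
  ext i j; simp [vecMulVec_apply, mul_assoc]

lemma vmv_neg_left (a c : Fin n → ℝ) : vecMulVec (-a) c = -vecMulVec a c := by
  ext i j; simp [vecMulVec_apply]

lemma vmv_zero_left (c : Fin n → ℝ) : vecMulVec (0 : Fin n → ℝ) c = 0 := by
  ext i j; simp [vecMulVec_apply]

lemma vmv_zero_right (a : Fin n → ℝ) : vecMulVec a (0 : Fin n → ℝ) = 0 := by
  ext i j; simp [vecMulVec_apply]

/-- Uniqueness of Moore–Penrose pseudoinverse. -/
lemma mp_unique (A P Q : Matrix (Fin n) (Fin n) ℝ)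
    (hP : IsMoorePenrose A P) (hQ : IsMoorePenrose A Q) : P = Q := by
  obtain ⟨hP1, hP2, hP3, hP4⟩ := hP
  obtain ⟨hQ1, hQ2, hQ3, hQ4⟩ := hQ
  have hAP : A * P = A * Q := by
    calc A * P = Pᵀ * Aᵀ := by rw [← hP3, transpose_mul]
      _ = Pᵀ * (A * Q * A)ᵀ := by rw [hQ1]
      _ = Pᵀ * (Aᵀ * (A * Q)ᵀ) := by rw [transpose_mul]
      _ = Pᵀ * (Aᵀ * (A * Q)) := by rw [hQ3]
      _ = (Pᵀ * Aᵀ) * (A * Q) := by noncomm_ring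
      _ = (A * P) * (A * Q) := by rw [← transpose_mul, hP3]
      _ = (A * P * A) * Q := by noncomm_ring
      _ = A * Q := by rw [hP1]
  have hPA : P * A = Q * A := by
    calc P * A = Aᵀ * Pᵀ := by rw [← hP4, transpose_mul]
      _ = (A * Q * A)ᵀ * Pᵀ := by rw [hQ1]
      _ = ((Q * A)ᵀ * Aᵀ) * Pᵀ := by simp only [transpose_mul]; noncomm_ring
      _ = ((Q * A) * Aᵀ) * Pᵀ := by rw [hQ4]
      _ = (Q * A) * (Aᵀ * Pᵀ) := by noncomm_ring
      _ = (Q * A) * (P * A)ᵀ := by rw [transpose_mul]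
      _ = (Q * A) * (P * A) := by rw [hP4]
      _ = Q * (A * P * A) := by noncomm_ring
      _ = Q * A := by rw [hP1]
  calc P = P * A * P := hP2.symm
    _ = Q * A * P := by rw [hPA]
    _ = Q * (A * P) := by rw [Matrix.mul_assoc]
    _ = Q * (A * Q) := by rw [hAP]
    _ = Q * A * Q := by rw [Matrix.mul_assoc]
    _ = Q := hQ2

/-- If `A` is symmetric, its Moore–Penrose pseudoinverse is symmetric. -/
lemma mp_symm (A P : Matrix (Fin n) (Fin n) ℝ) (hA : Aᵀ = A)
    (hP : IsMoorePenrose A P) : Pᵀ = P := by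
  obtain ⟨hP1, hP2, hP3, hP4⟩ := hP
  refine mp_unique A Pᵀ P ?_ ⟨hP1, hP2, hP3, hP4⟩
  refine ⟨?_, ?_, ?_, ?_⟩
  · calc A * Pᵀ * A = Aᵀ * Pᵀ * Aᵀ := by rw [hA]
      _ = (A * P * A)ᵀ := by rw [transpose_mul, transpose_mul]; noncomm_ring
      _ = Aᵀ := by rw [hP1]
      _ = A := hA
  · calc Pᵀ * A * Pᵀ = Pᵀ * Aᵀ * Pᵀ := by rw [hA]
      _ = (P * A * P)ᵀ := by rw [transpose_mul, transpose_mul]; noncomm_ring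
      _ = Pᵀ := by rw [hP2]
  · have h : A * Pᵀ = (P * A)ᵀ := by rw [transpose_mul, hA]
    rw [h, transpose_transpose]; exact hP4.symm
  · have h : Pᵀ * A = (A * P)ᵀ := by rw [transpose_mul, hA]
    rw [h, transpose_transpose]; exact hP3.symm

end PinvAux

open PinvAux

/-- Rank-one pseudoinverse update (case `y ≠ 0`): if `A` is symmetric with pseudoinverse `P`,
`x = P v`, `y = (1 - A*P) v ≠ 0` and `β = 1 + vᵀ (P v)`, then
`P - (1/‖y‖²) • (x yᵀ + y xᵀ) + (β/‖y‖⁴) • y yᵀ` is a Moore–Penrose pseudoinverse of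
`A + v vᵀ`, where `‖y‖² = yᵀ y`. -/
theorem pinv_rank_one_update_not_in_range {n : ℕ} (A P : Matrix (Fin n) (Fin n) ℝ)
    (hA : Aᵀ = A) (hP : IsMoorePenrose A P) (v x y : Fin n → ℝ)
    (hx : x = P.mulVec v)
    (hy : y = (1 - A * P).mulVec v)
    (hy0 : y ≠ 0) :
    IsMoorePenrose (A + Matrix.vecMulVec v v)
      (P - (1 / (y ⬝ᵥ y)) • (Matrix.vecMulVec x y + Matrix.vecMulVec y x)
         + ((1 + v ⬝ᵥ P.mulVec v) / (y ⬝ᵥ y) ^ 2) • Matrix.vecMulVec y y) := by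
  obtain ⟨hP1, hP2, hP3, hP4⟩ := hP
  have hPt : Pᵀ = P := mp_symm A P hA ⟨hP1, hP2, hP3, hP4⟩
  have hAPPA : A * P = P * A := by rw [← hP3, transpose_mul, hPt, hA]
  subst hx
  set s := y ⬝ᵥ y with hs_def
  have hs : s ≠ 0 := by
    simp only [hs_def]
    intro h
    exact hy0 (dotProduct_self_eq_zero.mp h)
  -- basic vector facts
  have hAPv : (A * P).mulVec v = v - y := by
    rw [hy, sub_mulVec, one_mulVec]; abel
  have hPy : P.mulVec y = 0 := by
    rw [hy, sub_mulVec, one_mulVec, mulVec_sub, mulVec_mulVec, ← Matrix.mul_assoc, hP2]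
    abel
  have hAy : A.mulVec y = 0 := by
    rw [hy, sub_mulVec, one_mulVec, mulVec_sub, mulVec_mulVec, hAPPA,
      ← Matrix.mul_assoc, hP1, sub_self]
  have hAPy : (A * P).mulVec y = 0 := by
    rw [← mulVec_mulVec, hPy, mulVec_zero]
  have hAx : A.mulVec (P.mulVec v) = v - y := by
    rw [mulVec_mulVec, hAPv]
  have hAPx : (A * P).mulVec (P.mulVec v) = P.mulVec v := by
    rw [mulVec_mulVec, hAPPA, hP2]
  have hyv : y ⬝ᵥ v = s := by
    have : v = y + (A * P).mulVec v := by rw [hAPv]; abel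
    rw [this, dotProduct_add, dotProduct_mulVec]
    have hyAP : y ᵥ* (A * P) = 0 := by
      rw [← mulVec_transpose, hP3, hAPy]
    rw [hyAP, zero_dotProduct, add_zero, hs_def]
  have hvy : v ⬝ᵥ y = s := by rw [dotProduct_comm, hyv]
  have hyx : y ⬝ᵥ P.mulVec v = 0 := by
    rw [dotProduct_mulVec]
    have : y ᵥ* P = 0 := by rw [← mulVec_transpose, hPt, hPy]
    rw [this, zero_dotProduct]
  have hxy : P.mulVec v ⬝ᵥ y = 0 := by rw [dotProduct_comm, hyx]
  set B : Matrix (Fin n) (Fin n) ℝ :=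
    P - (1 / s) • (vecMulVec (P.mulVec v) y + vecMulVec y (P.mulVec v))
      + ((1 + v ⬝ᵥ P.mulVec v) / s ^ 2) • vecMulVec y y with hB_def
  set M : Matrix (Fin n) (Fin n) ℝ := A + vecMulVec v v with hM_def
  have hPAP : P * (A * P) = P := by rw [← Matrix.mul_assoc, hP2]
  have hMB : M * B = A * P + (1 / s) • vecMulVec y y := by
    rw [hM_def, hB_def]
    simp only [Matrix.add_mul, Matrix.mul_add, Matrix.mul_sub, Matrix.sub_mul,
      Matrix.mul_smul, Matrix.smul_mul, mul_vmv, vmv_mul, vmv_vmv, vmv_mulVec,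
      vmv_smul_left, hAx, hAy, hPt, hvy, hyv, ← hs_def, vmv_sub_left, vmv_zero_left,
      smul_zero]
    match_scalars <;> field_simp <;> ring
  have hBt : Bᵀ = B := by
    rw [hB_def]
    simp only [transpose_add, transpose_sub, transpose_smul, vmv_transpose, hPt]
    module
  have hMt : Mᵀ = M := by
    rw [hM_def]
    simp only [transpose_add, hA, vmv_transpose]
  have hBM : B * M = A * P + (1 / s) • vecMulVec y y := by
    have h1 : B * M = (M * B)ᵀ := by rw [transpose_mul, hBt, hMt]
    rw [h1, hMB, transpose_add, transpose_smul, vmv_transpose, hP3]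
  refine ⟨?_, ?_, ?_, ?_⟩
  · -- M * B * M = M
    rw [hMB, hM_def]
    simp only [Matrix.add_mul, Matrix.mul_add, Matrix.smul_mul, mul_vmv, vmv_mul,
      vmv_vmv, vmv_mulVec, vmv_smul_left, hP1, hAPv, hA, hAy, hyv, hvy, ← hs_def,
      vmv_sub_left, vmv_zero_right, vmv_zero_left, smul_zero]
    match_scalars <;> field_simp <;> ring
  · -- B * M * B = B
    rw [Matrix.mul_assoc, hMB, hB_def]
    simp only [Matrix.add_mul, Matrix.mul_add, Matrix.sub_mul, Matrix.mul_smul,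
      Matrix.smul_mul, mul_vmv, vmv_mul, vmv_vmv, vmv_mulVec, vmv_smul_left, hPt,
      hA, hP3, hPAP, hPy, hAy, hAx, hAPy, hAPx, mulVec_sub, mulVec_zero, sub_zero,
      hxy, hyx, ← hs_def, vmv_sub_left, vmv_zero_left, vmv_zero_right, smul_zero,
      zero_smul, transpose_transpose]
    match_scalars <;> field_simp <;> ring
  · -- (M * B)ᵀ = M * B
    rw [hMB, transpose_add, transpose_smul, vmv_transpose, hP3]
  · -- (B * M)ᵀ = B * M
    rw [hBM, transpose_add, transpose_smul, vmv_transpose, hP3]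
end

section
/- Let A ∈ Matrix (Fin n) (Fin n) ℝ be symmetric positive semi-definite and let v ∈ Fin n → ℝ. Then: (i) if v does not lie in the range of A.mulVec, then (A + Matrix.vecMulVec v v).rank = A.rank + 1; (ii) if v lies in the range of A.mulVec, then (A + Matrix.vecMulVec v v).rank = A.rank. -/
open Matrix

section Aux

variable {n : ℕ}

/-- The dot product bilinear form on `Fin n → ℝ`. -/
noncomputable def dotForm (n : ℕ) : LinearMap.BilinForm ℝ (Fin n → ℝ) :=
  LinearMap.mk₂ ℝ (fun x y => x ⬝ᵥ y)
    (fun x y z => add_dotProduct x y z)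
    (fun c x y => smul_dotProduct c x y)
    (fun x y z => dotProduct_add x y z)
    (fun c x y => dotProduct_smul c x y)

@[simp] lemma dotForm_apply (x y : Fin n → ℝ) : dotForm n x y = x ⬝ᵥ y := rfl

lemma dotForm_symm : (dotForm n).IsSymm := LinearMap.BilinForm.isSymm_def.2 fun x y => by
  simp [dotProduct_comm]

lemma dotForm_refl : (dotForm n).IsRefl := dotForm_symm.isRefl

lemma dotForm_nondegenerate : (dotForm n).Nondegenerate := ⟨fun x hx => by
  have := hx x
  simpa [dotProduct_self_eq_zero] using this, fun x hx => by
  have := hx x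
  simpa [dotProduct_self_eq_zero] using this⟩

/-- For a symmetric real matrix, the range of `mulVec` is the orthogonal complement of the
kernel with respect to the dot product. -/
lemma range_eq_orthogonal_ker {A : Matrix (Fin n) (Fin n) ℝ} (hA : Aᵀ = A) :
    LinearMap.range A.mulVecLin = (dotForm n).orthogonal (LinearMap.ker A.mulVecLin) := by
  have hle : LinearMap.range A.mulVecLin ≤
      (dotForm n).orthogonal (LinearMap.ker A.mulVecLin) := by
    rintro y ⟨x, rfl⟩ z hz
    have hz' : A *ᵥ z = 0 := hz
    simp only [LinearMap.BilinForm.IsOrtho, dotForm_apply, Matrix.mulVecLin_apply]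
    have hvm : z ᵥ* A = A *ᵥ z := by
      conv_lhs => rw [← hA]
      exact Matrix.vecMul_transpose A z
    calc z ⬝ᵥ A *ᵥ x = (z ᵥ* A) ⬝ᵥ x := by rw [Matrix.dotProduct_mulVec]
    _ = (A *ᵥ z) ⬝ᵥ x := by rw [hvm]
    _ = 0 := by rw [hz', zero_dotProduct]
  refine Submodule.eq_of_le_of_finrank_eq hle ?_
  have h1 : Module.finrank ℝ (LinearMap.range A.mulVecLin) +
      Module.finrank ℝ (LinearMap.ker A.mulVecLin) = n := by
    simpa using LinearMap.finrank_range_add_finrank_ker A.mulVecLin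
  have h2 := LinearMap.BilinForm.finrank_orthogonal dotForm_nondegenerate
    (LinearMap.ker A.mulVecLin)
  have h3 : Module.finrank ℝ (Fin n → ℝ) = n := by simp
  omega

lemma posSemidef_vecMulVec (v : Fin n → ℝ) : (Matrix.vecMulVec v v).PosSemidef := by
  refine Matrix.PosSemidef.of_dotProduct_mulVec_nonneg ?_ ?_
  · ext i j
    simp [Matrix.vecMulVec_apply, mul_comm]
  · intro x
    have h : Matrix.vecMulVec v v *ᵥ x = (v ⬝ᵥ x) • v := by
      ext i
      simp only [Matrix.mulVec, Matrix.vecMulVec_apply, dotProduct, Pi.smul_apply,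
        smul_eq_mul, Finset.sum_mul, Matrix.of_apply]
      exact Finset.sum_congr rfl fun j _ => by ring
    rw [h]
    simp only [RCLike.star_def, starRingEnd_apply, star_trivial, dotProduct_smul]
    have : x ⬝ᵥ v = v ⬝ᵥ x := dotProduct_comm x v
    rw [this, smul_eq_mul]
    exact mul_self_nonneg _

lemma vecMulVec_mulVec' (v x : Fin n → ℝ) :
    Matrix.vecMulVec v v *ᵥ x = (v ⬝ᵥ x) • v := by
  ext i
  simp only [Matrix.mulVec, Matrix.vecMulVec_apply, dotProduct, Pi.smul_apply,
    smul_eq_mul, Finset.sum_mul, Matrix.of_apply]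
  exact Finset.sum_congr rfl fun j _ => by ring

lemma range_vecMulVec_le (v : Fin n → ℝ) :
    LinearMap.range (Matrix.vecMulVec v v).mulVecLin ≤ Submodule.span ℝ {v} := by
  rintro y ⟨x, rfl⟩
  rw [Matrix.mulVecLin_apply, vecMulVec_mulVec']
  exact Submodule.smul_mem _ _ (Submodule.mem_span_singleton_self v)

lemma range_vecMulVec (v : Fin n → ℝ) (hv : v ≠ 0) :
    LinearMap.range (Matrix.vecMulVec v v).mulVecLin = Submodule.span ℝ {v} := by
  refine le_antisymm (range_vecMulVec_le v) ?_
  rw [Submodule.span_singleton_le_iff_mem]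
  refine ⟨(v ⬝ᵥ v)⁻¹ • v, ?_⟩
  rw [Matrix.mulVecLin_apply, Matrix.mulVec_smul, vecMulVec_mulVec', smul_smul]
  have hvv : v ⬝ᵥ v ≠ 0 := by
    simpa [dotProduct_self_eq_zero] using hv
  rw [inv_mul_cancel₀ hvv, one_smul]

/-- The kernel of the sum of two real PSD matrices is the intersection of kernels. -/
lemma ker_add_of_posSemidef {A B : Matrix (Fin n) (Fin n) ℝ}
    (hA : A.PosSemidef) (hB : B.PosSemidef) :
    LinearMap.ker (A + B).mulVecLin = LinearMap.ker A.mulVecLin ⊓ LinearMap.ker B.mulVecLin := by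
  ext x
  simp only [LinearMap.mem_ker, Submodule.mem_inf, Matrix.mulVecLin_apply]
  constructor
  · intro h
    have hAB : (A + B).PosSemidef := hA.add hB
    have h0 : x ⬝ᵥ (A + B) *ᵥ x = 0 := by
      rw [h, dotProduct_zero]
    rw [Matrix.add_mulVec, dotProduct_add] at h0
    have hA0 : (0:ℝ) ≤ x ⬝ᵥ A *ᵥ x := by simpa using hA.dotProduct_mulVec_nonneg x
    have hB0 : (0:ℝ) ≤ x ⬝ᵥ B *ᵥ x := by simpa using hB.dotProduct_mulVec_nonneg x
    have hAx : x ⬝ᵥ A *ᵥ x = 0 := by linarith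
    have hBx : x ⬝ᵥ B *ᵥ x = 0 := by linarith
    constructor
    · have := (hA.dotProduct_mulVec_zero_iff x).mp (by simpa using hAx)
      exact this
    · have := (hB.dotProduct_mulVec_zero_iff x).mp (by simpa using hBx)
      exact this
  · rintro ⟨h1, h2⟩
    rw [Matrix.add_mulVec, h1, h2, add_zero]

/-- The range of the sum of two real PSD matrices is the sup of ranges. -/
lemma range_add_of_posSemidef {A B : Matrix (Fin n) (Fin n) ℝ}
    (hA : A.PosSemidef) (hB : B.PosSemidef) :
    LinearMap.range (A + B).mulVecLin =
      LinearMap.range A.mulVecLin ⊔ LinearMap.range B.mulVecLin := by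
  refine le_antisymm ?_ ?_
  · rintro y ⟨x, rfl⟩
    rw [Matrix.mulVecLin_apply, Matrix.add_mulVec]
    exact Submodule.add_mem_sup ⟨x, rfl⟩ ⟨x, rfl⟩
  · have hS : (A + B)ᵀ = A + B := (hA.add hB).1
    have hSA : Aᵀ = A := hA.1
    have hSB : Bᵀ = B := hB.1
    rw [range_eq_orthogonal_ker hS, range_eq_orthogonal_ker hSA, range_eq_orthogonal_ker hSB,
      ker_add_of_posSemidef hA hB]
    exact sup_le (LinearMap.BilinForm.orthogonal_le inf_le_left)
      (LinearMap.BilinForm.orthogonal_le inf_le_right)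

end Aux

/-- Rank of a rank-one update of a symmetric positive semi-definite matrix: adding `v vᵀ`
increases the rank by one exactly when `v` is outside the column space of `A`, and leaves
the rank unchanged when `v` is in the column space of `A`. -/
theorem rank_add_vecMulVec_self {n : ℕ} (A : Matrix (Fin n) (Fin n) ℝ)
    (hA : A.PosSemidef) (v : Fin n → ℝ) :
    (v ∉ LinearMap.range A.mulVecLin →
      (A + Matrix.vecMulVec v v).rank = A.rank + 1) ∧
    (v ∈ LinearMap.range A.mulVecLin →
      (A + Matrix.vecMulVec v v).rank = A.rank) := by
  have hV := posSemidef_vecMulVec v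
  have hrange := range_add_of_posSemidef hA hV
  constructor
  · intro hv
    have hv0 : v ≠ 0 := by
      rintro rfl
      exact hv (Submodule.zero_mem _)
    have hrv := range_vecMulVec v hv0
    have hinf : LinearMap.range A.mulVecLin ⊓ Submodule.span ℝ {v} = ⊥ := by
      rw [Submodule.eq_bot_iff]
      rintro x ⟨hx1, hx2⟩
      have hx2' : x ∈ Submodule.span ℝ {v} := hx2
      have hx1' : x ∈ LinearMap.range A.mulVecLin := hx1
      rw [Submodule.mem_span_singleton] at hx2'
      obtain ⟨c, rfl⟩ := hx2'
      by_contra hne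
      have hc : c ≠ 0 := by
        rintro rfl
        exact hne (zero_smul _ _)
      exact hv (by simpa [smul_smul, inv_mul_cancel₀ hc] using
        Submodule.smul_mem _ c⁻¹ hx1')
    have := Submodule.finrank_sup_add_finrank_inf_eq
      (LinearMap.range A.mulVecLin) (Submodule.span ℝ {v})
    rw [hinf, finrank_bot, add_zero, finrank_span_singleton hv0] at this
    rw [Matrix.rank, hrange, hrv, Matrix.rank]
    exact this
  · intro hv
    rw [Matrix.rank, hrange, Matrix.rank]
    have : LinearMap.range (Matrix.vecMulVec v v).mulVecLin ≤ LinearMap.range A.mulVecLin :=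
      le_trans (range_vecMulVec_le v) (by rwa [Submodule.span_singleton_le_iff_mem])
    rw [sup_eq_left.mpr this]
end

section
/- (Golub–Klema–Stewart bound.) Let A ∈ Matrix (Fin m) (Fin n) ℝ have rank r̃ ≥ 1, and suppose A = U * Σ * Vᵀ is a singular value decomposition: U ∈ Matrix (Fin m) (Fin m) ℝ and V ∈ Matrix (Fin n) (Fin n) ℝ are orthogonal, and Σ ∈ Matrix (Fin m) (Fin n) ℝ vanishes off the diagonal with diagonal entries σ₁ ≥ σ₂ ≥ ... ≥ 0, exactly r̃ of which are nonzero. Let P ∈ Matrix (Fin n) (Fin n) ℝ be a permutation matrix, write A * P = [B₁ B₂] where B₁ consists of the first r̃ columns of A * P, and write Pᵀ * V in block form with top-left r̃ × r̃ block Ṽ₁₁, assumed invertible. Then σ_r̃(A) / ‖Ṽ₁₁⁻¹‖₂ ≤ σ_r̃(B₁) ≤ σ_r̃(A), where σ_r̃(A) = σ_{r̃} is the r̃-th largest singular value of A, σ_r̃(B₁) is the smallest singular value of B₁ (i.e., the infimum of ‖B₁.mulVec x‖ over unit vectors x ∈ Fin r̃ → ℝ), and ‖·‖₂ is the spectral norm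 (the supremum of ‖M.mulVec x‖ over unit vectors x); in particular B₁ has full column rank r̃. -/
open Matrix Finset

/-- Euclidean norm of a vector in `Fin k → ℝ`. -/
noncomputable def euclNorm {k : ℕ} (v : Fin k → ℝ) : ℝ :=
  Real.sqrt (∑ i, v i ^ 2)

/-- Spectral norm of a real matrix: supremum of `‖M x‖` over Euclidean-unit vectors `x`. -/
noncomputable def specNorm {m k : ℕ} (M : Matrix (Fin m) (Fin k) ℝ) : ℝ :=
  sSup {c | ∃ x : Fin k → ℝ, euclNorm x = 1 ∧ c = euclNorm (M.mulVec x)}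

/-- Smallest singular value of a real matrix: infimum of `‖M x‖` over Euclidean-unit
vectors `x`. -/
noncomputable def minSingVal {m k : ℕ} (M : Matrix (Fin m) (Fin k) ℝ) : ℝ :=
  sInf {c | ∃ x : Fin k → ℝ, euclNorm x = 1 ∧ c = euclNorm (M.mulVec x)}


section GKSHelpers

open Matrix Finset

lemma euclNorm_nonneg {k : ℕ} (v : Fin k → ℝ) : 0 ≤ euclNorm v := Real.sqrt_nonneg _

lemma euclNorm_sq {k : ℕ} (v : Fin k → ℝ) : euclNorm v ^ 2 = ∑ i, v i ^ 2 :=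
  Real.sq_sqrt (by positivity)

lemma sum_sq_of_euclNorm_one {k : ℕ} {v : Fin k → ℝ} (h : euclNorm v = 1) :
    ∑ i, v i ^ 2 = 1 := by
  have h2 := euclNorm_sq v
  rw [h] at h2
  simpa using h2.symm

lemma euclNorm_eq_zero {k : ℕ} {v : Fin k → ℝ} (h : euclNorm v = 0) : v = 0 := by
  have h2 : ∑ i, v i ^ 2 = 0 := by
    have h3 := euclNorm_sq v
    rw [h] at h3
    simpa using h3.symm
  funext i
  have := (Finset.sum_eq_zero_iff_of_nonneg (fun i _ => sq_nonneg (v i))).1 h2 i (mem_univ i)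
  exact sq_eq_zero_iff.1 this

lemma euclNorm_smul {k : ℕ} (a : ℝ) (v : Fin k → ℝ) : euclNorm (a • v) = |a| * euclNorm v := by
  unfold euclNorm
  have h : ∑ i, (a • v) i ^ 2 = a ^ 2 * ∑ i, v i ^ 2 := by
    rw [Finset.mul_sum]
    refine Finset.sum_congr rfl fun i _ => ?_
    simp [mul_pow]
  rw [h, Real.sqrt_mul (sq_nonneg a), Real.sqrt_sq_eq_abs]

lemma euclNorm_single {k : ℕ} (i : Fin k) : euclNorm (Pi.single i 1 : Fin k → ℝ) = 1 := by
  unfold euclNorm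
  have h : ∑ j, (Pi.single i 1 : Fin k → ℝ) j ^ 2 = 1 := by
    rw [Finset.sum_eq_single i]
    · simp
    · intro j _ hj; simp [Pi.single_apply, hj]
    · intro h; exact absurd (mem_univ i) h
  rw [h, Real.sqrt_one]

lemma sum_castLE {a b : ℕ} (h : a ≤ b) (f : Fin b → ℝ)
    (hf : ∀ j : Fin b, ¬ (j : ℕ) < a → f j = 0) :
    ∑ j, f j = ∑ j : Fin a, f (Fin.castLE h j) := by
  have h1 : ∑ j ∈ Finset.univ.map (Fin.castLEEmb h), f j = ∑ j : Fin a, f (Fin.castLE h j) := by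
    rw [Finset.sum_map]
    rfl
  rw [← h1]
  refine (Finset.sum_subset (Finset.subset_univ _) fun x _ hx => hf x fun hlt => ?_).symm
  exact hx (Finset.mem_map.2 ⟨⟨(x : ℕ), hlt⟩, Finset.mem_univ _, by ext; simp⟩)

lemma sum_castLE_le {a b : ℕ} (h : a ≤ b) (f : Fin b → ℝ) (hf : ∀ j, 0 ≤ f j) :
    ∑ j : Fin a, f (Fin.castLE h j) ≤ ∑ j, f j := by
  have h1 : ∑ j ∈ Finset.univ.map (Fin.castLEEmb h), f j = ∑ j : Fin a, f (Fin.castLE h j) := by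
    rw [Finset.sum_map]
    rfl
  rw [← h1]
  exact Finset.sum_le_sum_of_subset_of_nonneg (Finset.subset_univ _) fun i _ _ => hf i

lemma svset_nonempty {m k : ℕ} (hk : 0 < k) (M : Matrix (Fin m) (Fin k) ℝ) :
    {c | ∃ x : Fin k → ℝ, euclNorm x = 1 ∧ c = euclNorm (M.mulVec x)}.Nonempty :=
  ⟨_, ⟨Pi.single ⟨0, hk⟩ 1, euclNorm_single _, rfl⟩⟩

lemma svset_bddBelow {m k : ℕ} (M : Matrix (Fin m) (Fin k) ℝ) :
    BddBelow {c | ∃ x : Fin k → ℝ, euclNorm x = 1 ∧ c = euclNorm (M.mulVec x)} := by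
  refine ⟨0, ?_⟩
  rintro c ⟨x, hx, rfl⟩
  exact euclNorm_nonneg _

lemma svset_bddAbove {m k : ℕ} (M : Matrix (Fin m) (Fin k) ℝ) :
    BddAbove {c | ∃ x : Fin k → ℝ, euclNorm x = 1 ∧ c = euclNorm (M.mulVec x)} := by
  refine ⟨Real.sqrt (∑ i, ∑ j, M i j ^ 2), ?_⟩
  rintro c ⟨x, hx, rfl⟩
  unfold euclNorm
  apply Real.sqrt_le_sqrt
  have hx1 := sum_sq_of_euclNorm_one hx
  calc ∑ i, (M.mulVec x) i ^ 2
      ≤ ∑ i, ((∑ j, M i j ^ 2) * ∑ j, x j ^ 2) := by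
        refine Finset.sum_le_sum fun i _ => ?_
        have h := Finset.sum_mul_sq_le_sq_mul_sq Finset.univ (fun j => M i j) x
        simpa [Matrix.mulVec, dotProduct] using h
    _ = ∑ i, ∑ j, M i j ^ 2 := by rw [hx1]; simp

lemma le_specNorm {m k : ℕ} (M : Matrix (Fin m) (Fin k) ℝ) {x : Fin k → ℝ}
    (hx : euclNorm x = 1) : euclNorm (M.mulVec x) ≤ specNorm M :=
  le_csSup (svset_bddAbove M) ⟨x, hx, rfl⟩

lemma specNorm_nonneg {m k : ℕ} (hk : 0 < k) (M : Matrix (Fin m) (Fin k) ℝ) :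
    0 ≤ specNorm M :=
  le_trans (euclNorm_nonneg _) (le_specNorm M (euclNorm_single ⟨0, hk⟩))

lemma euclNorm_mulVec_le {m k : ℕ} (hk : 0 < k) (M : Matrix (Fin m) (Fin k) ℝ)
    (z : Fin k → ℝ) : euclNorm (M.mulVec z) ≤ specNorm M * euclNorm z := by
  by_cases hz : euclNorm z = 0
  · have hz0 : z = 0 := euclNorm_eq_zero hz
    subst hz0
    rw [hz, mul_zero, Matrix.mulVec_zero]
    unfold euclNorm
    simp
  · have hz' : 0 < euclNorm z := lt_of_le_of_ne (euclNorm_nonneg z) (Ne.symm hz)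
    have hunit : euclNorm ((euclNorm z)⁻¹ • z) = 1 := by
      rw [euclNorm_smul, abs_of_pos (inv_pos.2 hz'), inv_mul_cancel₀ (ne_of_gt hz')]
    have h1 : M.mulVec z = (euclNorm z) • M.mulVec ((euclNorm z)⁻¹ • z) := by
      rw [Matrix.mulVec_smul, smul_smul, mul_inv_cancel₀ (ne_of_gt hz'), one_smul]
    rw [h1, euclNorm_smul, abs_of_pos hz', mul_comm]
    exact mul_le_mul_of_nonneg_right (le_specNorm M hunit) (le_of_lt hz')

lemma dot_le_euclNorm {k : ℕ} (u v : Fin k → ℝ) : u ⬝ᵥ v ≤ euclNorm u * euclNorm v := by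
  have h := Finset.sum_mul_sq_le_sq_mul_sq Finset.univ u v
  refine (le_abs_self _).trans ?_
  rw [← Real.sqrt_sq_eq_abs]
  unfold euclNorm
  rw [← Real.sqrt_mul (by positivity)]
  exact Real.sqrt_le_sqrt (by simpa [dotProduct] using h)

lemma sum_sq_mulVec_orth {k : ℕ} {M : Matrix (Fin k) (Fin k) ℝ} (h : Mᵀ * M = 1)
    (v : Fin k → ℝ) : ∑ i, (M.mulVec v) i ^ 2 = ∑ i, v i ^ 2 := by
  have h1 : (M.mulVec v) ⬝ᵥ (M.mulVec v) = v ⬝ᵥ v := by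
    rw [Matrix.dotProduct_mulVec, ← Matrix.mulVec_transpose, Matrix.mulVec_mulVec, h,
      Matrix.one_mulVec]
  simpa [dotProduct, sq] using h1

lemma specNorm_transpose_le {k : ℕ} (hk : 0 < k) (M : Matrix (Fin k) (Fin k) ℝ) :
    specNorm Mᵀ ≤ specNorm M := by
  refine csSup_le (svset_nonempty hk Mᵀ) ?_
  rintro c ⟨x, hx, rfl⟩
  have h1 : euclNorm (Mᵀ.mulVec x) ^ 2 = x ⬝ᵥ M.mulVec (Mᵀ.mulVec x) := by
    rw [Matrix.dotProduct_mulVec, ← Matrix.mulVec_transpose, euclNorm_sq]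
    simp [dotProduct, sq]
  have h2 : x ⬝ᵥ M.mulVec (Mᵀ.mulVec x) ≤ specNorm M * euclNorm (Mᵀ.mulVec x) :=
    calc x ⬝ᵥ M.mulVec (Mᵀ.mulVec x)
        ≤ euclNorm x * euclNorm (M.mulVec (Mᵀ.mulVec x)) := dot_le_euclNorm _ _
      _ = euclNorm (M.mulVec (Mᵀ.mulVec x)) := by rw [hx, one_mul]
      _ ≤ specNorm M * euclNorm (Mᵀ.mulVec x) := euclNorm_mulVec_le hk M _
  rcases eq_or_lt_of_le (euclNorm_nonneg (Mᵀ.mulVec x)) with h0 | h0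
  · rw [← h0]; exact specNorm_nonneg hk M
  · nlinarith [h1, h2]

lemma le_of_sq_le_sq' {a b : ℝ} (ha : 0 ≤ a) (hb : 0 ≤ b) (h : a ^ 2 ≤ b ^ 2) : a ≤ b := by
  nlinarith

end GKSHelpers

/-- Golub–Klema–Stewart bound: given an SVD `A = U * Sg * Vᵀ` of a rank-`rr` matrix `A`
(with singular values `d 0 ≥ d 1 ≥ …`, exactly the first `rr` of which are nonzero),
a permutation matrix `P`, the matrix `B₁` of the first `rr` columns of `A * P`, and the
top-left `rr × rr` block `V₁₁` of `Pᵀ * V`, assumed invertible, we have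
`σ_rr(A) / ‖V₁₁⁻¹‖₂ ≤ σ_rr(B₁) ≤ σ_rr(A)`; in particular `B₁` has full column rank `rr`. -/
theorem golub_klema_stewart {m n rr : ℕ} (hr : 1 ≤ rr) (hm : rr ≤ m) (hn : rr ≤ n)
    (A : Matrix (Fin m) (Fin n) ℝ) (hrank : A.rank = rr)
    (U : Matrix (Fin m) (Fin m) ℝ) (hU : U ∈ Matrix.orthogonalGroup (Fin m) ℝ)
    (V : Matrix (Fin n) (Fin n) ℝ) (hV : V ∈ Matrix.orthogonalGroup (Fin n) ℝ)
    (Sg : Matrix (Fin m) (Fin n) ℝ) (d : ℕ → ℝ)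
    (hSVD : A = U * Sg * Vᵀ)
    (hSg : ∀ (i : Fin m) (j : Fin n), Sg i j = if (i : ℕ) = (j : ℕ) then d (i : ℕ) else 0)
    (hd_anti : ∀ i j : ℕ, i ≤ j → d j ≤ d i)
    (hd_pos : ∀ i : ℕ, i < rr → 0 < d i)
    (hd_zero : ∀ i : ℕ, rr ≤ i → d i = 0)
    (P : Matrix (Fin n) (Fin n) ℝ) (e : Equiv.Perm (Fin n)) (hP : P = e.permMatrix ℝ)
    (B₁ : Matrix (Fin m) (Fin rr) ℝ) (hB₁ : B₁ = (A * P).submatrix id (Fin.castLE hn))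
    (V₁₁ : Matrix (Fin rr) (Fin rr) ℝ)
    (hV₁₁ : V₁₁ = (Pᵀ * V).submatrix (Fin.castLE hn) (Fin.castLE hn))
    (hinv : IsUnit V₁₁) :
    d (rr - 1) / specNorm V₁₁⁻¹ ≤ minSingVal B₁ ∧
    minSingVal B₁ ≤ d (rr - 1) ∧
    B₁.rank = rr := by
  have hk : 0 < rr := hr
  -- orthogonality facts
  have hUo : Uᵀ * U = 1 := by
    have h := (Matrix.mem_orthogonalGroup_iff' _ _).1 hU
    simpa [Matrix.star_eq_conjTranspose,
      Matrix.conjTranspose_eq_transpose_of_trivial] using h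
  have hVo : V * Vᵀ = 1 := by
    have h := (Matrix.mem_orthogonalGroup_iff _ _).1 hV
    simpa [Matrix.star_eq_conjTranspose,
      Matrix.conjTranspose_eq_transpose_of_trivial] using h
  have hPo : Pᵀ * P = 1 := by
    subst hP
    rw [← PEquiv.toMatrix_symm, ← Equiv.toPEquiv_symm, ← PEquiv.toMatrix_trans,
      ← Equiv.toPEquiv_trans]
    simp
  set W : Matrix (Fin n) (Fin n) ℝ := Pᵀ * V with hWdef
  have hWo : W * Wᵀ = 1 := by
    rw [hWdef, Matrix.transpose_mul, Matrix.transpose_transpose, Matrix.mul_assoc,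
      ← Matrix.mul_assoc V, hVo, Matrix.one_mul, hPo]
  have hAP : A * P = U * Sg * Wᵀ := by
    rw [hSVD, hWdef, Matrix.transpose_mul, Matrix.transpose_transpose, Matrix.mul_assoc]
  -- invertibility facts
  have hdet : IsUnit V₁₁.det := (Matrix.isUnit_iff_isUnit_det _).1 hinv
  have hNV : V₁₁⁻¹ * V₁₁ = 1 := Matrix.nonsing_inv_mul _ hdet
  have hVN : V₁₁ * V₁₁⁻¹ = 1 := Matrix.mul_nonsing_inv _ hdet
  have hTinv1 : (V₁₁⁻¹)ᵀ * V₁₁ᵀ = 1 := by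
    rw [← Matrix.transpose_mul, hVN, Matrix.transpose_one]
  have hTinv2 : V₁₁ᵀ * (V₁₁⁻¹)ᵀ = 1 := by
    rw [← Matrix.transpose_mul, hNV, Matrix.transpose_one]
  -- extension of vectors by zero
  set ext : (Fin rr → ℝ) → (Fin n → ℝ) :=
    fun x j => if h : (j : ℕ) < rr then x ⟨(j : ℕ), h⟩ else 0 with hextdef
  have hext_cast : ∀ (x : Fin rr → ℝ) (j : Fin rr), ext x (Fin.castLE hn j) = x j := by
    intro x j
    have hlt : ((Fin.castLE hn j : Fin n) : ℕ) < rr := by simp [Fin.coe_castLE, j.2]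
    simp only [hextdef]
    rw [dif_pos hlt]
    congr 1
  have hext_zero : ∀ (x : Fin rr → ℝ) (j : Fin n), ¬ (j : ℕ) < rr → ext x j = 0 :=
    fun x j h => dif_neg h
  -- the key identities
  have keyB : ∀ x : Fin rr → ℝ,
      B₁.mulVec x = U.mulVec (Sg.mulVec (Wᵀ.mulVec (ext x))) := by
    intro x
    rw [Matrix.mulVec_mulVec, Matrix.mulVec_mulVec, ← hAP]
    funext i
    simp only [Matrix.mulVec, dotProduct, hB₁, Matrix.submatrix_apply, id]
    rw [sum_castLE hn (fun j => (A * P) i j * ext x j)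
      (fun j hj => by beta_reduce; rw [hext_zero x j hj, mul_zero])]
    exact Finset.sum_congr rfl fun j _ => by simp only [hext_cast]
  have keyU : ∀ w : Fin m → ℝ, ∑ i, (U.mulVec w) i ^ 2 = ∑ i, w i ^ 2 :=
    fun w => sum_sq_mulVec_orth hUo w
  have keyW : ∀ v : Fin n → ℝ, ∑ i, (Wᵀ.mulVec v) i ^ 2 = ∑ i, v i ^ 2 := by
    intro v
    refine sum_sq_mulVec_orth ?_ v
    rw [Matrix.transpose_transpose]
    exact hWo
  have keySg : ∀ y : Fin n → ℝ,
      ∑ i : Fin m, (Sg.mulVec y) i ^ 2 = ∑ i : Fin rr, d (i : ℕ) ^ 2 * y (Fin.castLE hn i) ^ 2 := by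
    intro y
    have hSgm : ∀ i : Fin m, Sg.mulVec y i =
        if h : (i : ℕ) < n then d (i : ℕ) * y ⟨(i : ℕ), h⟩ else 0 := by
      intro i
      simp only [Matrix.mulVec, dotProduct, hSg]
      by_cases h : (i : ℕ) < n
      · rw [dif_pos h, Finset.sum_eq_single (⟨(i : ℕ), h⟩ : Fin n)]
        · simp
        · intro j _ hj
          rw [if_neg, zero_mul]
          intro hc
          exact hj (Fin.ext hc.symm)
        · intro h'; exact absurd (Finset.mem_univ _) h'
      · rw [dif_neg h]
        refine Finset.sum_eq_zero fun j _ => ?_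
        rw [if_neg, zero_mul]
        intro hc
        exact h (hc ▸ j.2)
    have hvanish : ∀ i : Fin m, ¬ (i : ℕ) < rr → (Sg.mulVec y) i ^ 2 = 0 := by
      intro i hi
      rw [hSgm i]
      by_cases h : (i : ℕ) < n
      · rw [dif_pos h, hd_zero _ (by omega), zero_mul]
        simp
      · rw [dif_neg h]; simp
    rw [sum_castLE hm (fun i => (Sg.mulVec y) i ^ 2) hvanish]
    refine Finset.sum_congr rfl fun i _ => ?_
    have hlt : ((Fin.castLE hm i : Fin m) : ℕ) < n := by
      simp only [Fin.coe_castLE]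
      omega
    rw [hSgm, dif_pos hlt, mul_pow]
    rfl
  have keyV : ∀ (x : Fin rr → ℝ) (i : Fin rr),
      (Wᵀ.mulVec (ext x)) (Fin.castLE hn i) = (V₁₁ᵀ.mulVec x) i := by
    intro x i
    simp only [Matrix.mulVec, dotProduct, Matrix.transpose_apply]
    rw [sum_castLE hn (fun k => W k (Fin.castLE hn i) * ext x k)
      (fun k hk => by beta_reduce; rw [hext_zero x k hk, mul_zero])]
    refine Finset.sum_congr rfl fun k _ => ?_
    simp only [hext_cast]
    congr 1
    rw [hV₁₁]
    simp [hWdef]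
  have master : ∀ x : Fin rr → ℝ,
      ∑ i, (B₁.mulVec x) i ^ 2 = ∑ i : Fin rr, d (i : ℕ) ^ 2 * (V₁₁ᵀ.mulVec x) i ^ 2 := by
    intro x
    rw [keyB, keyU, keySg]
    exact Finset.sum_congr rfl fun i _ => by rw [keyV]
  have master2 : ∀ x : Fin rr → ℝ,
      ∑ i : Fin rr, (V₁₁ᵀ.mulVec x) i ^ 2 ≤ ∑ i, x i ^ 2 := by
    intro x
    calc ∑ i : Fin rr, (V₁₁ᵀ.mulVec x) i ^ 2
        = ∑ i : Fin rr, (Wᵀ.mulVec (ext x)) (Fin.castLE hn i) ^ 2 :=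
          Finset.sum_congr rfl fun i _ => by rw [keyV]
      _ ≤ ∑ j : Fin n, (Wᵀ.mulVec (ext x)) j ^ 2 :=
          sum_castLE_le hn _ (fun j => sq_nonneg _)
      _ = ∑ j, ext x j ^ 2 := keyW _
      _ = ∑ i : Fin rr, x i ^ 2 := by
          rw [sum_castLE hn (fun j => ext x j ^ 2)
            (fun j hj => by beta_reduce; rw [hext_zero x j hj]; ring)]
          exact Finset.sum_congr rfl fun i _ => by simp only [hext_cast]
  set δ := d (rr - 1) with hδ
  have hδpos : 0 < δ := hd_pos _ (by omega)
  have hdge : ∀ i : Fin rr, δ ≤ d (i : ℕ) := fun i => hd_anti _ _ (by have := i.2; omega)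
  have hdpos' : ∀ i : Fin rr, 0 < d (i : ℕ) := fun i => hd_pos _ i.2
  have hrec : ∀ x : Fin rr → ℝ, (V₁₁⁻¹)ᵀ.mulVec (V₁₁ᵀ.mulVec x) = x := by
    intro x
    rw [Matrix.mulVec_mulVec, hTinv1, Matrix.one_mulVec]
  have hS : 0 < specNorm V₁₁⁻¹ := by
    have hu1 : euclNorm (Pi.single (⟨0, hk⟩ : Fin rr) 1 : Fin rr → ℝ) = 1 := euclNorm_single _
    have hne : V₁₁⁻¹.mulVec (Pi.single ⟨0, hk⟩ 1) ≠ 0 := by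
      intro h0
      have hu0 : (Pi.single (⟨0, hk⟩ : Fin rr) 1 : Fin rr → ℝ) = 0 := by
        have h1 := congrArg (V₁₁.mulVec) h0
        rwa [Matrix.mulVec_mulVec, hVN, Matrix.one_mulVec, Matrix.mulVec_zero] at h1
      have h2 := congrFun hu0 ⟨0, hk⟩
      simp at h2
    have hpos : 0 < euclNorm (V₁₁⁻¹.mulVec (Pi.single ⟨0, hk⟩ 1)) :=
      lt_of_le_of_ne (euclNorm_nonneg _) (fun h => hne (euclNorm_eq_zero h.symm))
    exact lt_of_lt_of_le hpos (le_specNorm _ hu1)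
  refine ⟨?_, ?_, ?_⟩
  · -- lower bound
    refine le_csInf (svset_nonempty hk B₁) ?_
    rintro c ⟨x, hx, rfl⟩
    set z := V₁₁ᵀ.mulVec x with hz
    have h1 : δ * euclNorm z ≤ euclNorm (B₁.mulVec x) := by
      apply le_of_sq_le_sq' (mul_nonneg hδpos.le (euclNorm_nonneg _)) (euclNorm_nonneg _)
      rw [mul_pow, euclNorm_sq, euclNorm_sq, master x, Finset.mul_sum]
      refine Finset.sum_le_sum fun i _ => ?_
      have h2 := hdge i
      nlinarith [sq_nonneg (z i), mul_self_le_mul_self hδpos.le (hdge i)]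
    have h2 : 1 ≤ specNorm V₁₁⁻¹ * euclNorm z := by
      calc (1 : ℝ) = euclNorm x := hx.symm
        _ = euclNorm ((V₁₁⁻¹)ᵀ.mulVec z) := by rw [hz, hrec]
        _ ≤ specNorm (V₁₁⁻¹)ᵀ * euclNorm z := euclNorm_mulVec_le hk _ z
        _ ≤ specNorm V₁₁⁻¹ * euclNorm z :=
            mul_le_mul_of_nonneg_right (specNorm_transpose_le hk _) (euclNorm_nonneg _)
    rw [div_le_iff₀ hS]
    calc δ = δ * 1 := (mul_one δ).symm
      _ ≤ δ * (specNorm V₁₁⁻¹ * euclNorm z) := by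
          exact mul_le_mul_of_nonneg_left h2 hδpos.le
      _ = (δ * euclNorm z) * specNorm V₁₁⁻¹ := by ring
      _ ≤ euclNorm (B₁.mulVec x) * specNorm V₁₁⁻¹ :=
          mul_le_mul_of_nonneg_right h1 hS.le
  · -- upper bound
    set ilast : Fin rr := ⟨rr - 1, by omega⟩ with hil
    set x₀ : Fin rr → ℝ := (V₁₁⁻¹)ᵀ.mulVec (Pi.single ilast 1) with hx₀def
    have hVx₀ : V₁₁ᵀ.mulVec x₀ = Pi.single ilast 1 := by
      rw [hx₀def, Matrix.mulVec_mulVec, hTinv2, Matrix.one_mulVec]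
    have hx₀ne : euclNorm x₀ ≠ 0 := by
      intro h
      have h0 : x₀ = 0 := euclNorm_eq_zero h
      have h1 : (Pi.single ilast (1 : ℝ) : Fin rr → ℝ) = 0 := by
        rw [← hVx₀, h0, Matrix.mulVec_zero]
      have h2 := congrFun h1 ilast
      simp at h2
    have ha : 0 < euclNorm x₀ := lt_of_le_of_ne (euclNorm_nonneg _) (Ne.symm hx₀ne)
    set a := euclNorm x₀ with hadef
    set xh := a⁻¹ • x₀ with hxh
    have hxh1 : euclNorm xh = 1 := by
      rw [hxh, euclNorm_smul, abs_of_pos (inv_pos.2 ha), inv_mul_cancel₀ (ne_of_gt ha)]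
    have hzh : V₁₁ᵀ.mulVec xh = a⁻¹ • (Pi.single ilast 1 : Fin rr → ℝ) := by
      rw [hxh, Matrix.mulVec_smul, hVx₀]
    have hzsq : ∀ i : Fin rr, (V₁₁ᵀ.mulVec xh) i ^ 2 =
        if i = ilast then (a⁻¹) ^ 2 else 0 := by
      intro i
      rw [hzh]
      by_cases hi : i = ilast
      · subst hi; simp [mul_pow]
      · simp [Pi.single_apply, hi]
    have hsum : ∑ i : Fin rr, d (i : ℕ) ^ 2 * (V₁₁ᵀ.mulVec xh) i ^ 2 = δ ^ 2 * (a⁻¹) ^ 2 := by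
      rw [Finset.sum_eq_single ilast]
      · rw [hzsq, if_pos rfl, hδ]
      · intro j _ hj
        rw [hzsq, if_neg hj, mul_zero]
      · intro h'; exact absurd (Finset.mem_univ _) h'
    have hz2 : ∑ i : Fin rr, (V₁₁ᵀ.mulVec xh) i ^ 2 = (a⁻¹) ^ 2 := by
      rw [Finset.sum_eq_single ilast]
      · rw [hzsq, if_pos rfl]
      · intro j _ hj
        rw [hzsq, if_neg hj]
      · intro h'; exact absurd (Finset.mem_univ _) h'
    have hinvle : (a⁻¹) ^ 2 ≤ 1 := by
      rw [← hz2]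
      exact (master2 xh).trans_eq (sum_sq_of_euclNorm_one hxh1)
    have hBle : euclNorm (B₁.mulVec xh) ≤ δ := by
      apply le_of_sq_le_sq' (euclNorm_nonneg _) hδpos.le
      rw [euclNorm_sq, master xh, hsum]
      nlinarith [sq_nonneg δ]
    exact le_trans (csInf_le (svset_bddBelow B₁) ⟨xh, hxh1, rfl⟩) hBle
  · -- rank
    have hinj : Function.Injective B₁.mulVecLin := by
      rw [← LinearMap.ker_eq_bot, LinearMap.ker_eq_bot']
      intro x hx0
      have hx0' : B₁.mulVec x = 0 := by rwa [Matrix.mulVecLin_apply] at hx0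
      have h0 : ∑ i, (B₁.mulVec x) i ^ 2 = 0 := by
        rw [hx0']
        simp
      rw [master x] at h0
      have hz0 : V₁₁ᵀ.mulVec x = 0 := by
        funext i
        have h1 := (Finset.sum_eq_zero_iff_of_nonneg
          (fun i _ => by positivity)).1 h0 i (Finset.mem_univ i)
        rcases mul_eq_zero.1 h1 with h2 | h2
        · exact absurd (sq_eq_zero_iff.1 h2) (ne_of_gt (hdpos' i))
        · exact sq_eq_zero_iff.1 h2
      have hxe : x = 0 := by rw [← hrec x, hz0, Matrix.mulVec_zero]
      exact hxe
    have hr1 : B₁.rank = Module.finrank ℝ (LinearMap.range B₁.mulVecLin) := rfl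
    rw [hr1, LinearMap.finrank_range_of_inj hinj, Module.finrank_fin_fun]
end
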